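/- Let n be an odd perfect number whose prime factorization is n = p₁^{α₁} ⋯ p_k^{α_k} · p_{k+1}^{β}, where p₁, …, p_{k+1} are distinct odd primes, each α_i (1 ≤ i ≤ k) is even, β is odd, and p_{k+1} ≡ 1 (mod 8). Then there exist indices i ≠ j in {1, …, k+1} such that p_i is a nonzero square in ℤ/p_jℤ, i.e., the Legendre symbol (p_i / p_j) = 1. -/
import Mathlib


open Finset

private lemma key_qr {q r m : ℕ} (hq : q.Prime)
    (hdvd : q ∣ ∑ j ∈ range (2 * m + 1), r ^ j) :
    @legendreSym q ⟨hq⟩ r = 1 := by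
  haveI : Fact q.Prime := ⟨hq⟩
  set x : ZMod q := (r : ZMod q) with hx
  have hsum : ∑ j ∈ range (2 * m + 1), x ^ j = 0 := by
    have hsum0 : ((∑ j ∈ range (2 * m + 1), r ^ j : ℕ) : ZMod q) = 0 :=
      (ZMod.natCast_eq_zero_iff _ _).mpr hdvd
    push_cast at hsum0
    exact hsum0
  have hpow : x ^ (2 * m + 1) = 1 := by
    have h := geom_sum_mul x (2 * m + 1)
    rw [hsum, zero_mul] at h
    linear_combination -h
  have hx0 : x ≠ 0 := by
    intro h0
    rw [h0, zero_pow (by omega)] at hpow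
    exact zero_ne_one hpow
  have hsq : IsSquare x := by
    refine ⟨x ^ (m + 1), ?_⟩
    have h2 : x ^ (m + 1) * x ^ (m + 1) = x ^ (2 * m + 1) * x := by ring
    rw [h2, hpow, one_mul]
  exact (legendreSym.eq_one_iff' q hx0).mpr hsq

/-- If `n` is an odd perfect number with prime factorization
`n = p₁^{α₁} ⋯ p_k^{α_k} · p_{k+1}^β`, where the `pᵢ` are distinct odd primes,
each `αᵢ` (for `i ≤ k`) is even, `β` is odd and `p_{k+1} ≡ 1 [MOD 8]`, then
there are indices `i ≠ j` such that `pᵢ` is a nonzero square modulo `p_j`. -/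
theorem stmt5 (n k : ℕ) (p : Fin (k + 1) → ℕ) (α : Fin (k + 1) → ℕ)
    (hn_odd : Odd n) (hn_perf : n.Perfect)
    (hp_prime : ∀ i, (p i).Prime) (hp_odd : ∀ i, Odd (p i))
    (hp_inj : Function.Injective p)
    (hα_even : ∀ i : Fin k, Even (α i.castSucc))
    (hα_pos : ∀ i, 0 < α i)
    (hβ_odd : Odd (α (Fin.last k)))
    (hq1 : p (Fin.last k) % 8 = 1)
    (hfac : n = ∏ i, p i ^ α i) :
    ∃ i j : Fin (k + 1), i ≠ j ∧ @legendreSym (p j) ⟨hp_prime j⟩ (p i) = 1 := by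
  classical
  have hn_pos : 0 < n := hn_odd.pos
  set q := p (Fin.last k) with hqdef
  have hqp : q.Prime := hp_prime _
  have hσ : (ArithmeticFunction.sigma 1) n = 2 * n := by
    rw [ArithmeticFunction.sigma_one_apply]
    exact (Nat.perfect_iff_sum_divisors_eq_two_mul hn_pos).mp hn_perf
  have hmul : (ArithmeticFunction.sigma 1) n =
      ∏ i, (ArithmeticFunction.sigma 1) (p i ^ α i) := by
    rw [hfac]
    refine ArithmeticFunction.isMultiplicative_sigma.map_prod _ _ ?_
    intro i _ j _ hij
    exact Nat.Coprime.pow _ _ ((Nat.coprime_primes (hp_prime i) (hp_prime j)).mpr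
      fun h => hij (hp_inj h))
  have hqn : q ∣ n := by
    rw [hfac]
    exact dvd_trans (dvd_pow_self q (hα_pos (Fin.last k)).ne')
      (Finset.dvd_prod_of_mem _ (mem_univ _))
  have hqdvd : q ∣ ∏ i, (ArithmeticFunction.sigma 1) (p i ^ α i) := by
    rw [← hmul, hσ]
    exact hqn.mul_left 2
  obtain ⟨i, -, hi⟩ := hqp.prime.exists_mem_finset_dvd hqdvd
  rw [ArithmeticFunction.sigma_one_apply_prime_pow (hp_prime i)] at hi
  have hine : i ≠ Fin.last k := by
    intro heq
    rw [heq, ← hqdef] at hi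
    haveI : Fact q.Prime := ⟨hqp⟩
    have h0 : ((∑ j ∈ range (α (Fin.last k) + 1), q ^ j : ℕ) : ZMod q) = 0 :=
      (ZMod.natCast_eq_zero_iff _ _).mpr hi
    push_cast at h0
    rw [ZMod.natCast_self] at h0
    simp [zero_pow_eq] at h0
  obtain ⟨i', rfl⟩ := Fin.exists_castSucc_eq.mpr hine
  obtain ⟨m, hm⟩ := hα_even i'
  have hm2 : α i'.castSucc + 1 = 2 * m + 1 := by omega
  rw [hm2] at hi
  exact ⟨i'.castSucc, Fin.last k, hine, key_qr hqp hi⟩
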